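/- Let 1 ≤ p ≤ ∞ and let E be a normed space. Then the minimal L_p(X)-quantization of E (the norm of L_p(X) ⊗_ε E on L_p(X) ⊗ E) is p-convex: if u, v ∈ L_p(X) ⊗ E have supports P_{X'}, P_{X''} with X' ∩ X'' of measure zero (P · u = u, Q · v = v), then ‖u + v‖_min ≤ (‖u‖_min^p + ‖v‖_min^p)^{1/p} (with the convention max(‖u‖,‖v‖) when p = ∞). -/

import Mathlib

open MeasureTheory TensorProduct
open scoped ENNReal

/-- The minimal (injective) tensor norm on `L ⊗ E`:
`‖u‖_min = sup{‖(id ⊗ f)(u)‖ : f ∈ E*, ‖f‖ ≤ 1}`. -/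
noncomputable def minNorm {L E : Type*} [NormedAddCommGroup L] [NormedSpace ℂ L]
    [NormedAddCommGroup E] [NormedSpace ℂ E] (u : L ⊗[ℂ] E) : ℝ :=
  sSup {r : ℝ | ∃ f : E →L[ℂ] ℂ, ‖f‖ ≤ 1 ∧
    r = ‖(TensorProduct.rid ℂ L) (LinearMap.lTensor L (f : E →ₗ[ℂ] ℂ) u)‖}

section Aux

variable {L E : Type*} [NormedAddCommGroup L] [NormedSpace ℂ L]
  [NormedAddCommGroup E] [NormedSpace ℂ E]

/-- The set whose supremum is `minNorm`. -/
def minSet (u : L ⊗[ℂ] E) : Set ℝ :=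
  {r : ℝ | ∃ f : E →L[ℂ] ℂ, ‖f‖ ≤ 1 ∧
    r = ‖(TensorProduct.rid ℂ L) (LinearMap.lTensor L (f : E →ₗ[ℂ] ℂ) u)‖}

lemma minNorm_eq_sSup (u : L ⊗[ℂ] E) : minNorm u = sSup (minSet u) := rfl

lemma zero_mem_minSet (u : L ⊗[ℂ] E) : (0 : ℝ) ∈ minSet u := by
  refine ⟨0, by simp, ?_⟩
  have h0 : ((0 : E →L[ℂ] ℂ) : E →ₗ[ℂ] ℂ) = 0 := rfl
  rw [h0, LinearMap.lTensor_zero]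
  simp

lemma exists_bound_minSet (u : L ⊗[ℂ] E) : ∃ C : ℝ, ∀ f : E →L[ℂ] ℂ, ‖f‖ ≤ 1 →
    ‖(TensorProduct.rid ℂ L) (LinearMap.lTensor L (f : E →ₗ[ℂ] ℂ) u)‖ ≤ C := by
  induction u using TensorProduct.induction_on with
  | zero => exact ⟨0, fun f _ => by simp⟩
  | tmul ξ x =>
      refine ⟨‖ξ‖ * ‖x‖, fun f hf => ?_⟩
      rw [LinearMap.lTensor_tmul, TensorProduct.rid_tmul, norm_smul]
      have h1 : ‖f x‖ ≤ ‖x‖ := by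
        calc ‖f x‖ ≤ ‖f‖ * ‖x‖ := f.le_opNorm x
        _ ≤ 1 * ‖x‖ := by gcongr
        _ = ‖x‖ := one_mul _
      calc ‖f x‖ * ‖ξ‖ ≤ ‖x‖ * ‖ξ‖ := by gcongr
      _ = ‖ξ‖ * ‖x‖ := mul_comm _ _
  | add a b ha hb =>
      obtain ⟨C1, h1⟩ := ha
      obtain ⟨C2, h2⟩ := hb
      refine ⟨C1 + C2, fun f hf => ?_⟩
      rw [map_add, map_add]
      exact (norm_add_le _ _).trans (add_le_add (h1 f hf) (h2 f hf))

lemma bddAbove_minSet (u : L ⊗[ℂ] E) : BddAbove (minSet u) := by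
  obtain ⟨C, hC⟩ := exists_bound_minSet u
  exact ⟨C, fun r hr => by obtain ⟨f, hf, rfl⟩ := hr; exact hC f hf⟩

lemma minNorm_nonneg (u : L ⊗[ℂ] E) : 0 ≤ minNorm u :=
  le_csSup (bddAbove_minSet u) (zero_mem_minSet u)

lemma norm_le_minNorm (u : L ⊗[ℂ] E) {f : E →L[ℂ] ℂ} (hf : ‖f‖ ≤ 1) :
    ‖(TensorProduct.rid ℂ L) (LinearMap.lTensor L (f : E →ₗ[ℂ] ℂ) u)‖ ≤ minNorm u :=
  le_csSup (bddAbove_minSet u) ⟨f, hf, rfl⟩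

lemma rid_lTensor_rTensor (T : L →ₗ[ℂ] L) (f : E →ₗ[ℂ] ℂ) (w : L ⊗[ℂ] E) :
    TensorProduct.rid ℂ L (LinearMap.lTensor L f (LinearMap.rTensor E T w))
      = T (TensorProduct.rid ℂ L (LinearMap.lTensor L f w)) := by
  induction w using TensorProduct.induction_on with
  | zero => simp
  | tmul ξ x => simp [TensorProduct.rid_tmul]
  | add a b ha hb => simp [map_add, ha, hb]

end Aux

section LpLemmas

variable {X : Type*} [MeasurableSpace X] {μ : Measure X} {p : ℝ≥0∞}

lemma lp_disjoint_add_finite [Fact (1 ≤ p)] (hp : p ≠ ∞) (g h : Lp ℂ p μ) {A B : Set X}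
    (hAB : μ (A ∩ B) = 0)
    (hg : (g : X → ℂ) =ᵐ[μ] A.indicator g) (hh : (h : X → ℂ) =ᵐ[μ] B.indicator h) :
    ‖g + h‖ ≤ (‖g‖ ^ p.toReal + ‖h‖ ^ p.toReal) ^ (1 / p.toReal) := by
  have hp1 : 1 ≤ p := Fact.out
  have hp0 : p ≠ 0 := by
    intro h0; rw [h0] at hp1; simp at hp1
  set q := p.toReal with hqdef
  have hq0 : 0 < q := ENNReal.toReal_pos hp0 hp
  have hN : ∀ᵐ x ∂μ, x ∉ A ∩ B := measure_eq_zero_iff_ae_notMem.mp hAB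
  set Ig := ∫⁻ x, (‖g x‖₊ : ℝ≥0∞) ^ q ∂μ with hIgdef
  set Ih := ∫⁻ x, (‖h x‖₊ : ℝ≥0∞) ^ q ∂μ with hIhdef
  have key : ∀ᵐ x ∂μ, (‖(⇑(g + h)) x‖₊ : ℝ≥0∞) ^ q
      = (‖g x‖₊ : ℝ≥0∞) ^ q + (‖h x‖₊ : ℝ≥0∞) ^ q := by
    filter_upwards [Lp.coeFn_add g h, hg, hh, hN] with x hadd hgx hhx hx
    rw [hadd]
    by_cases hxA : x ∈ A
    · have hxB : x ∉ B := fun hxB => hx ⟨hxA, hxB⟩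
      have hh0 : h x = 0 := by rw [hhx, Set.indicator_of_notMem hxB]
      simp [Pi.add_apply, hh0, ENNReal.zero_rpow_of_pos hq0]
    · have hg0 : g x = 0 := by rw [hgx, Set.indicator_of_notMem hxA]
      simp [Pi.add_apply, hg0, ENNReal.zero_rpow_of_pos hq0]
  have hgm : AEMeasurable (fun x => (‖g x‖₊ : ℝ≥0∞) ^ q) μ :=
    (Lp.aestronglyMeasurable g).enorm.pow aemeasurable_const
  have hint : ∫⁻ x, (‖(⇑(g + h)) x‖₊ : ℝ≥0∞) ^ q ∂μ = Ig + Ih := by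
    rw [lintegral_congr_ae key, lintegral_add_left' hgm]
  have hgN : eLpNorm (⇑g) p μ = Ig ^ (1 / q) :=
    eLpNorm_eq_lintegral_rpow_enorm_toReal hp0 hp
  have hhN : eLpNorm (⇑h) p μ = Ih ^ (1 / q) :=
    eLpNorm_eq_lintegral_rpow_enorm_toReal hp0 hp
  have hghN : eLpNorm (⇑(g + h)) p μ = (Ig + Ih) ^ (1 / q) := by
    rw [eLpNorm_eq_lintegral_rpow_enorm_toReal hp0 hp, ← hint]; rfl
  have hq0' : (0 : ℝ) < 1 / q := by positivity
  have hIg_lt : Ig < ∞ := by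
    have := Lp.eLpNorm_lt_top g
    rw [hgN] at this
    exact (ENNReal.rpow_lt_top_iff_of_pos hq0').mp this
  have hIh_lt : Ih < ∞ := by
    have := Lp.eLpNorm_lt_top h
    rw [hhN] at this
    exact (ENNReal.rpow_lt_top_iff_of_pos hq0').mp this
  have hnormg : ‖g‖ ^ q = Ig.toReal := by
    rw [Lp.norm_def, hgN, ENNReal.toReal_rpow, ← ENNReal.rpow_mul,
      one_div_mul_cancel hq0.ne', ENNReal.rpow_one]
  have hnormh : ‖h‖ ^ q = Ih.toReal := by
    rw [Lp.norm_def, hhN, ENNReal.toReal_rpow, ← ENNReal.rpow_mul,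
      one_div_mul_cancel hq0.ne', ENNReal.rpow_one]
  have : ‖g + h‖ = (‖g‖ ^ q + ‖h‖ ^ q) ^ (1 / q) := by
    rw [Lp.norm_def, hghN, hnormg, hnormh, ← ENNReal.toReal_add hIg_lt.ne hIh_lt.ne,
      ENNReal.toReal_rpow]
  exact le_of_eq this

lemma lp_disjoint_add_top [Fact (1 ≤ p)] (hp : p = ∞) (g h : Lp ℂ p μ) {A B : Set X}
    (hAB : μ (A ∩ B) = 0)
    (hg : (g : X → ℂ) =ᵐ[μ] A.indicator g) (hh : (h : X → ℂ) =ᵐ[μ] B.indicator h) :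
    ‖g + h‖ ≤ max ‖g‖ ‖h‖ := by
  subst hp
  have hN : ∀ᵐ x ∂μ, x ∉ A ∩ B := measure_eq_zero_iff_ae_notMem.mp hAB
  have hle : eLpNormEssSup (⇑(g + h)) μ
      ≤ max (eLpNormEssSup (⇑g) μ) (eLpNormEssSup (⇑h) μ) := by
    rw [eLpNormEssSup]
    refine essSup_le_of_ae_le _ ?_
    filter_upwards [Lp.coeFn_add g h, hg, hh, hN, ae_le_eLpNormEssSup (f := ⇑g) (μ := μ),
      ae_le_eLpNormEssSup (f := ⇑h) (μ := μ)] with x hadd hgx hhx hx hgb hhb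
    rw [hadd]
    by_cases hxA : x ∈ A
    · have hxB : x ∉ B := fun hxB => hx ⟨hxA, hxB⟩
      have hh0 : h x = 0 := by rw [hhx, Set.indicator_of_notMem hxB]
      simp only [Pi.add_apply, hh0, add_zero]
      exact le_max_of_le_left hgb
    · have hg0 : g x = 0 := by rw [hgx, Set.indicator_of_notMem hxA]
      simp only [Pi.add_apply, hg0, zero_add]
      exact le_max_of_le_right hhb
  have hfin : ∀ f : Lp ℂ ∞ μ, eLpNormEssSup (⇑f) μ ≠ ∞ := fun f => by
    have := Lp.eLpNorm_lt_top f
    rw [eLpNorm_exponent_top] at this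
    exact this.ne
  calc ‖g + h‖ = (eLpNorm (⇑(g + h)) ∞ μ).toReal := Lp.norm_def _
  _ = (eLpNormEssSup (⇑(g + h)) μ).toReal := by rw [eLpNorm_exponent_top]
  _ ≤ (max (eLpNormEssSup (⇑g) μ) (eLpNormEssSup (⇑h) μ)).toReal :=
      ENNReal.toReal_mono (by simp [hfin g, hfin h]) hle
  _ = max ‖g‖ ‖h‖ := by
      rw [ENNReal.toReal_max (hfin g) (hfin h), Lp.norm_def, Lp.norm_def,
        eLpNorm_exponent_top, eLpNorm_exponent_top]

end LpLemmas

/-- The minimal `L_p(X)`-quantization of a normed space `E` is `p`-convex: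
if `u, v ∈ L_p(X) ⊗ E` have supports `P_{X'}, P_{X''}` with `X' ∩ X''` of measure zero,
then `‖u + v‖_min ≤ (‖u‖_min^p + ‖v‖_min^p)^{1/p}` (with the max convention for `p = ∞`). -/
theorem minimal_quantization_p_convex
    (X : Type*) [MeasurableSpace X] (μ : Measure X)
    (p : ℝ≥0∞) [Fact (1 ≤ p)]
    (E : Type*) [NormedAddCommGroup E] [NormedSpace ℂ E]
    -- the indicator-multiplication projections on L_p(X)
    (P : Set X → (Lp ℂ p μ →L[ℂ] Lp ℂ p μ))
    (hP : ∀ (s : Set X) (f : Lp ℂ p μ), (P s f : X → ℂ) =ᵐ[μ] s.indicator f)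
    (u v : (Lp ℂ p μ) ⊗[ℂ] E) (A B : Set X)
    (hA : MeasurableSet A) (hB : MeasurableSet B) (hAB : μ (A ∩ B) = 0)
    (hu : LinearMap.rTensor E ((P A : Lp ℂ p μ →L[ℂ] Lp ℂ p μ) : Lp ℂ p μ →ₗ[ℂ] Lp ℂ p μ) u = u)
    (hv : LinearMap.rTensor E ((P B : Lp ℂ p μ →L[ℂ] Lp ℂ p μ) : Lp ℂ p μ →ₗ[ℂ] Lp ℂ p μ) v = v) :
    (p ≠ ∞ →
      minNorm (u + v) ≤ (minNorm u ^ p.toReal + minNorm v ^ p.toReal) ^ (1 / p.toReal)) ∧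
    (p = ∞ → minNorm (u + v) ≤ max (minNorm u) (minNorm v)) := by
  -- common setup: for every functional `f`, the slices of `u` and `v` are a.e. supported
  -- on `A` and `B` respectively.
  have hslice : ∀ (f : E →L[ℂ] ℂ),
      let g := (TensorProduct.rid ℂ (Lp ℂ p μ)) (LinearMap.lTensor _ (f : E →ₗ[ℂ] ℂ) u)
      let h := (TensorProduct.rid ℂ (Lp ℂ p μ)) (LinearMap.lTensor _ (f : E →ₗ[ℂ] ℂ) v)
      (g : X → ℂ) =ᵐ[μ] A.indicator g ∧ (h : X → ℂ) =ᵐ[μ] B.indicator h := by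
    intro f
    constructor
    · have heq : (TensorProduct.rid ℂ (Lp ℂ p μ)) (LinearMap.lTensor _ (f : E →ₗ[ℂ] ℂ) u)
          = P A ((TensorProduct.rid ℂ (Lp ℂ p μ)) (LinearMap.lTensor _ (f : E →ₗ[ℂ] ℂ) u)) := by
        conv_lhs => rw [← hu]
        exact rid_lTensor_rTensor _ _ u
      exact (Filter.EventuallyEq.of_eq
        (congrArg (fun z : Lp ℂ p μ => (z : X → ℂ)) heq)).trans (hP A _)
    · have heq : (TensorProduct.rid ℂ (Lp ℂ p μ)) (LinearMap.lTensor _ (f : E →ₗ[ℂ] ℂ) v)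
          = P B ((TensorProduct.rid ℂ (Lp ℂ p μ)) (LinearMap.lTensor _ (f : E →ₗ[ℂ] ℂ) v)) := by
        conv_lhs => rw [← hv]
        exact rid_lTensor_rTensor _ _ v
      exact (Filter.EventuallyEq.of_eq
        (congrArg (fun z : Lp ℂ p μ => (z : X → ℂ)) heq)).trans (hP B _)
  have hsum : ∀ (f : E →L[ℂ] ℂ),
      (TensorProduct.rid ℂ (Lp ℂ p μ)) (LinearMap.lTensor _ (f : E →ₗ[ℂ] ℂ) (u + v))
        = (TensorProduct.rid ℂ (Lp ℂ p μ)) (LinearMap.lTensor _ (f : E →ₗ[ℂ] ℂ) u)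
          + (TensorProduct.rid ℂ (Lp ℂ p μ)) (LinearMap.lTensor _ (f : E →ₗ[ℂ] ℂ) v) := by
    intro f; rw [map_add, map_add]
  constructor
  · intro hp
    have hq0 : 0 < p.toReal := ENNReal.toReal_pos
      (by intro h0; have h1 : (1 : ℝ≥0∞) ≤ p := Fact.out; rw [h0] at h1; simp at h1) hp
    have hRHS : 0 ≤ (minNorm u ^ p.toReal + minNorm v ^ p.toReal) ^ (1 / p.toReal) :=
      Real.rpow_nonneg (add_nonneg (Real.rpow_nonneg (minNorm_nonneg u) _)
        (Real.rpow_nonneg (minNorm_nonneg v) _)) _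
    refine Real.sSup_le ?_ hRHS
    rintro r ⟨f, hf, rfl⟩
    obtain ⟨hgA, hhB⟩ := hslice f
    set g := (TensorProduct.rid ℂ (Lp ℂ p μ)) (LinearMap.lTensor _ (f : E →ₗ[ℂ] ℂ) u) with hg
    set h := (TensorProduct.rid ℂ (Lp ℂ p μ)) (LinearMap.lTensor _ (f : E →ₗ[ℂ] ℂ) v) with hh
    rw [hsum f]
    calc ‖g + h‖ ≤ (‖g‖ ^ p.toReal + ‖h‖ ^ p.toReal) ^ (1 / p.toReal) :=
          lp_disjoint_add_finite hp g h hAB hgA hhB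
    _ ≤ (minNorm u ^ p.toReal + minNorm v ^ p.toReal) ^ (1 / p.toReal) := by
        apply Real.rpow_le_rpow
        · exact add_nonneg (Real.rpow_nonneg (norm_nonneg _) _)
            (Real.rpow_nonneg (norm_nonneg _) _)
        · exact add_le_add
            (Real.rpow_le_rpow (norm_nonneg _) (norm_le_minNorm u hf) hq0.le)
            (Real.rpow_le_rpow (norm_nonneg _) (norm_le_minNorm v hf) hq0.le)
        · positivity
  · intro hp
    have hRHS : 0 ≤ max (minNorm u) (minNorm v) :=
      le_max_of_le_left (minNorm_nonneg u)
    refine Real.sSup_le ?_ hRHS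
    rintro r ⟨f, hf, rfl⟩
    obtain ⟨hgA, hhB⟩ := hslice f
    set g := (TensorProduct.rid ℂ (Lp ℂ p μ)) (LinearMap.lTensor _ (f : E →ₗ[ℂ] ℂ) u) with hg
    set h := (TensorProduct.rid ℂ (Lp ℂ p μ)) (LinearMap.lTensor _ (f : E →ₗ[ℂ] ℂ) v) with hh
    rw [hsum f]
    calc ‖g + h‖ ≤ max ‖g‖ ‖h‖ := lp_disjoint_add_top hp g h hAB hgA hhB
    _ ≤ max (minNorm u) (minNorm v) :=
        max_le_max (norm_le_minNorm u hf) (norm_le_minNorm v hf)
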